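/- arXiv:1201.0240 — 2 statements merged into one kernel-verified Lean document; each statement's English description precedes it below -/
import Mathlib

section
/- Let k ≥ 1 and let ν_1 > ν_2 > … > ν_{2k−1} be real numbers. Suppose x_1,…,x_{2k−1}, x'_1,…,x'_{2k−1} ∈ ℂ and x_{2k}, x'_{2k} ∈ ℝ are such that the Hermitian matrices H(ν,x) and H(ν,x') have the same characteristic polynomial. Then x_{2k} = x'_{2k} and |x_i| = |x'_i| for every i = 1,…,2k−1. -/
open Matrix Polynomial

/-- The `2k × 2k` complex Hermitian matrix `H(ν, x)` with diagonal
`(ν₁, …, ν_{2k-1}, xlast)`, whose `(i, 2k)` entry is the conjugate of `x i` and whose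
`(2k, i)` entry is `x i` for `1 ≤ i ≤ 2k-1`, all other entries `0`. -/
def Hmat (k : ℕ) (ν : Fin (2*k-1) → ℝ) (x : Fin (2*k-1) → ℂ) (xlast : ℝ) :
    Matrix (Fin (2*k)) (Fin (2*k)) ℂ :=
  Matrix.of fun i j =>
    if hi : i.val < 2*k-1 then
      if hj : j.val < 2*k-1 then (if i = j then (ν ⟨i.val, hi⟩ : ℂ) else 0)
      else (starRingEnd ℂ) (x ⟨i.val, hi⟩)
    else if hj : j.val < 2*k-1 then x ⟨j.val, hj⟩ else (xlast : ℂ)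

noncomputable def Pchar (k : ℕ) (ν : Fin (2*k-1) → ℝ) (x : Fin (2*k-1) → ℂ) (xlast : ℝ) :
    Polynomial ℂ :=
  (X - C (xlast : ℂ)) * ∏ j, (X - C (ν j : ℂ))
  - ∑ i, C (x i * (starRingEnd ℂ) (x i)) * ∏ j ∈ Finset.univ.erase i, (X - C (ν j : ℂ))

lemma Hmat_charpoly (k : ℕ) (hk : 1 ≤ k) (ν : Fin (2*k-1) → ℝ) (x : Fin (2*k-1) → ℂ)
    (xlast : ℝ) : (Hmat k ν x xlast).charpoly = Pchar k ν x xlast := by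
  have hmk : 2*k-1+1 = 2*k := by omega
  set e : Fin (2*k-1) ⊕ Fin 1 ≃ Fin (2*k) := finSumFinEquiv.trans (finCongr hmk) with he
  have heval : ∀ i : Fin (2*k-1), (e (Sum.inl i)).val = i.val := by
    intro i; simp [he, finSumFinEquiv]
  have hevalr : ∀ j : Fin 1, (e (Sum.inr j)).val = 2*k-1 := by
    intro j; simp [he, finSumFinEquiv, Fin.val_eq_zero]
  -- block form of the charmatrix
  have hblock : (charmatrix (Hmat k ν x xlast)).submatrix e e =
      fromBlocks (Matrix.diagonal fun j => (X : ℂ[X]) - C (ν j : ℂ))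
        (Matrix.of fun i (_ : Fin 1) => -C ((starRingEnd ℂ) (x i)))
        (Matrix.of fun (_ : Fin 1) j => -C (x j))
        (Matrix.of fun (_ _ : Fin 1) => (X : ℂ[X]) - C (xlast : ℂ)) := by
    ext i j
    cases i with
    | inl i =>
      cases j with
      | inl j =>
        by_cases hij : i = j
        · subst hij
          simp [charmatrix_apply_eq, Hmat, heval]
        · have hne : e (Sum.inl i) ≠ e (Sum.inl j) := by
            simp [hij]
          rw [Matrix.submatrix_apply, charmatrix_apply_ne _ _ _ hne]
          have : Hmat k ν x xlast (e (Sum.inl i)) (e (Sum.inl j)) = 0 := by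
            have h1 := heval i; have h2 := heval j
            simp only [Hmat, Matrix.of_apply]
            rw [dif_pos (by omega : (e (Sum.inl i)).val < 2*k-1),
              dif_pos (by omega : (e (Sum.inl j)).val < 2*k-1), if_neg hne]
          simp [this, hij, Matrix.diagonal_apply_ne _ hij]
      | inr j =>
        have hne : e (Sum.inl i) ≠ e (Sum.inr j) := by simp
        rw [Matrix.submatrix_apply, charmatrix_apply_ne _ _ _ hne]
        have h1 := heval i; have h2 := hevalr j
        have : Hmat k ν x xlast (e (Sum.inl i)) (e (Sum.inr j)) =
            (starRingEnd ℂ) (x i) := by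
          simp only [Hmat, Matrix.of_apply]
          rw [dif_pos (by omega : (e (Sum.inl i)).val < 2*k-1),
            dif_neg (by omega : ¬ (e (Sum.inr j)).val < 2*k-1)]
          exact congrArg (starRingEnd ℂ) (congrArg x (Fin.ext h1))
        simp [this]
    | inr i =>
      cases j with
      | inl j =>
        have hne : e (Sum.inr i) ≠ e (Sum.inl j) := by simp
        rw [Matrix.submatrix_apply, charmatrix_apply_ne _ _ _ hne]
        have h1 := hevalr i; have h2 := heval j
        have : Hmat k ν x xlast (e (Sum.inr i)) (e (Sum.inl j)) = x j := by
          simp only [Hmat, Matrix.of_apply]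
          rw [dif_neg (by omega : ¬ (e (Sum.inr i)).val < 2*k-1),
            dif_pos (by omega : (e (Sum.inl j)).val < 2*k-1)]
          exact congrArg x (Fin.ext h2)
        simp [this]
      | inr j =>
        have hij : i = j := Subsingleton.elim i j
        subst hij
        have h1 := hevalr i
        have : Hmat k ν x xlast (e (Sum.inr i)) (e (Sum.inr i)) = (xlast : ℂ) := by
          simp only [Hmat, Matrix.of_apply]
          rw [dif_neg (by omega : ¬ (e (Sum.inr i)).val < 2*k-1)]
          rw [dif_neg (by omega : ¬ (e (Sum.inr i)).val < 2*k-1)]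
        simp [charmatrix_apply_eq, this]
  classical
  set φ : ℂ[X] →+* RatFunc ℂ := (algebraMap ℂ[X] (RatFunc ℂ)) with hφ
  have hinj : Function.Injective φ := IsFractionRing.injective _ _
  apply hinj
  set t : Fin (2*k-1) → RatFunc ℂ := fun j => φ ((X : ℂ[X]) - C (ν j : ℂ)) with htdef
  have ht : ∀ j, t j ≠ 0 := by
    intro j h
    refine X_sub_C_ne_zero ((ν j : ℂ)) (hinj ?_)
    rw [map_zero]
    exact h
  have hdet1 : φ (Hmat k ν x xlast).charpoly
      = ((((charmatrix (Hmat k ν x xlast)).submatrix e e)).map φ).det := by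
    rw [Matrix.charpoly, ← Matrix.det_submatrix_equiv_self e, RingHom.map_det,
      RingHom.mapMatrix_apply]
  rw [hdet1, hblock, Matrix.fromBlocks_map]
  have hAmap : (Matrix.diagonal fun j => (X : ℂ[X]) - C (ν j : ℂ)).map φ
      = Matrix.diagonal t := Matrix.diagonal_map (map_zero φ)
  rw [hAmap]
  have hright : Matrix.diagonal t * Matrix.diagonal (fun j => (t j)⁻¹) = 1 := by
    rw [Matrix.diagonal_mul_diagonal]
    have : (fun j => t j * (t j)⁻¹) = fun _ => 1 :=
      funext fun j => mul_inv_cancel₀ (ht j)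
    rw [this, Matrix.diagonal_one]
  have hleft : Matrix.diagonal (fun j => (t j)⁻¹) * Matrix.diagonal t = 1 := by
    rw [Matrix.diagonal_mul_diagonal]
    have : (fun j => (t j)⁻¹ * t j) = fun _ => 1 :=
      funext fun j => inv_mul_cancel₀ (ht j)
    rw [this, Matrix.diagonal_one]
  haveI iA : Invertible (Matrix.diagonal t) :=
    ⟨Matrix.diagonal fun j => (t j)⁻¹, hleft, hright⟩
  rw [Matrix.det_fromBlocks₁₁]
  have hinv : (⅟ (Matrix.diagonal t)) = Matrix.diagonal fun j => (t j)⁻¹ :=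
    invOf_eq_right_inv hright
  rw [hinv, Matrix.det_diagonal, Matrix.det_fin_one]
  have hentry : ((Matrix.of fun (_ _ : Fin 1) => (X : ℂ[X]) - C (xlast : ℂ)).map φ -
      ((Matrix.of fun (_ : Fin 1) j => -C (x j)).map φ) * Matrix.diagonal (fun j => (t j)⁻¹) *
        ((Matrix.of fun i (_ : Fin 1) => -C ((starRingEnd ℂ) (x i))).map φ)) 0 0
      = φ ((X : ℂ[X]) - C (xlast : ℂ))
        - ∑ j, φ (C (x j * (starRingEnd ℂ) (x j))) * (t j)⁻¹ := by
    rw [Matrix.sub_apply, Matrix.mul_assoc, Matrix.mul_apply]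
    refine congrArg₂ (· - ·) rfl (Finset.sum_congr rfl fun j _ => ?_)
    simp only [Matrix.map_apply, Matrix.of_apply, Matrix.diagonal_mul, map_neg,
      _root_.map_mul]
    ring
  rw [hentry]
  -- now expand the RHS
  have hrhs : φ (Pchar k ν x xlast)
      = (φ (X : ℂ[X]) - φ (C (xlast : ℂ))) * ∏ j, t j
        - ∑ i, φ (C (x i * (starRingEnd ℂ) (x i))) * ∏ j ∈ Finset.univ.erase i, t j := by
    simp only [Pchar, _root_.map_sub, _root_.map_mul, map_sum, map_prod, htdef]
  rw [hrhs, mul_sub, Finset.mul_sum]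
  congr 1
  · rw [_root_.map_sub]; ring
  refine Finset.sum_congr rfl fun j _ => ?_
  rw [← Finset.mul_prod_erase Finset.univ t (Finset.mem_univ j)]
  set c := φ (C (x j * (starRingEnd ℂ) (x j)))
  set P := ∏ l ∈ Finset.univ.erase j, t l
  calc t j * P * (c * (t j)⁻¹) = c * P * (t j * (t j)⁻¹) := by ring
    _ = c * P := by rw [mul_inv_cancel₀ (ht j), mul_one]

lemma Hmat_trace (k : ℕ) (hk : 1 ≤ k) (ν : Fin (2*k-1) → ℝ) (x : Fin (2*k-1) → ℂ)
    (xlast : ℝ) : (Hmat k ν x xlast).trace = (∑ j, (ν j : ℂ)) + xlast := by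
  have hmk : 2*k-1+1 = 2*k := by omega
  set e : Fin (2*k-1) ⊕ Fin 1 ≃ Fin (2*k) := finSumFinEquiv.trans (finCongr hmk) with he
  have heval : ∀ i : Fin (2*k-1), (e (Sum.inl i)).val = i.val := by
    intro i; simp [he, finSumFinEquiv]
  have hevalr : ∀ j : Fin 1, (e (Sum.inr j)).val = 2*k-1 := by
    intro j; simp [he, finSumFinEquiv, Fin.val_eq_zero]
  rw [Matrix.trace, ← Equiv.sum_comp e (fun i => Matrix.diag (Hmat k ν x xlast) i),
    Fintype.sum_sum_type]
  have h1 : ∀ i : Fin (2*k-1), Matrix.diag (Hmat k ν x xlast) (e (Sum.inl i)) = (ν i : ℂ) := by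
    intro i
    have hi := heval i
    have hlt : (e (Sum.inl i)).val < 2*k-1 := by omega
    simp only [Matrix.diag, Hmat, Matrix.of_apply, dif_pos hlt, if_pos trivial,
      eq_self_iff_true, if_true]
    exact congrArg (fun z : ℝ => (z : ℂ)) (congrArg ν (Fin.ext hi))
  have h2 : ∀ j : Fin 1, Matrix.diag (Hmat k ν x xlast) (e (Sum.inr j)) = (xlast : ℂ) := by
    intro j
    have hj := hevalr j
    simp only [Matrix.diag, Hmat, Matrix.of_apply]
    rw [dif_neg (by omega : ¬ (e (Sum.inr j)).val < 2*k-1),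
      dif_neg (by omega : ¬ (e (Sum.inr j)).val < 2*k-1)]
  simp only [h1, h2]
  simp

lemma Pchar_eval (k : ℕ) (ν : Fin (2*k-1) → ℝ) (x : Fin (2*k-1) → ℂ) (xlast : ℝ)
    (i : Fin (2*k-1)) :
    (Pchar k ν x xlast).eval ((ν i : ℂ))
      = -(x i * (starRingEnd ℂ) (x i)) * ∏ l ∈ Finset.univ.erase i, ((ν i : ℂ) - (ν l : ℂ)) := by
  unfold Pchar
  rw [eval_sub, eval_mul, eval_prod]
  have h0 : ∏ j : Fin (2*k-1), ((X : ℂ[X]) - C ((ν j : ℂ))).eval ((ν i : ℂ)) = 0 :=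
    Finset.prod_eq_zero (Finset.mem_univ i) (by simp)
  rw [h0, mul_zero, zero_sub, eval_finset_sum]
  rw [Finset.sum_eq_single i ?_ (by simp)]
  · rw [eval_mul, eval_C, eval_prod]
    rw [neg_mul]
    congr 1
    refine congrArg _ (Finset.prod_congr rfl fun l _ => ?_)
    simp
  · intro j _ hji
    rw [eval_mul, eval_prod]
    refine mul_eq_zero_of_right _ (Finset.prod_eq_zero (Finset.mem_erase.mpr ⟨hji.symm, Finset.mem_univ i⟩) ?_)
    simp

/-- For strictly decreasing `ν`, the data `(|x₁|, …, |x_{2k-1}|, x_{2k})` is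
determined by the characteristic polynomial of `H(ν, x)`. -/
theorem statement13 (k : ℕ) (hk : 1 ≤ k) (ν : Fin (2*k-1) → ℝ)
    (hstrict : ∀ i : ℕ, ∀ h : i + 1 < 2*k-1, ν ⟨i, by omega⟩ > ν ⟨i + 1, h⟩)
    (x x' : Fin (2*k-1) → ℂ) (xlast xlast' : ℝ)
    (hchar : (Hmat k ν x xlast).charpoly = (Hmat k ν x' xlast').charpoly) :
    xlast = xlast' ∧ ∀ i : Fin (2*k-1), ‖x i‖ = ‖x' i‖ := by
  have hmono : ∀ (a b : ℕ) (ha : a < 2*k-1) (hb : b < 2*k-1), a < b →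
      ν ⟨b, hb⟩ < ν ⟨a, ha⟩ := by
    intro a b
    induction b with
    | zero => intro _ _ h; omega
    | succ n ih =>
      intro ha hb hab
      rcases Nat.lt_or_ge a n with h | h
      · exact lt_trans (hstrict n hb) (ih ha (by omega) h)
      · have : a = n := by omega
        subst this
        exact hstrict a hb
  have hνinj : Function.Injective ν := by
    intro a b hab
    by_contra hne
    rcases lt_or_gt_of_ne (Fin.val_ne_of_ne hne) with h | h
    · exact absurd hab (ne_of_gt (by simpa using hmono a.val b.val a.isLt b.isLt h))
    · exact absurd hab.symm (ne_of_gt (by simpa using hmono b.val a.val b.isLt a.isLt h))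
  rw [Hmat_charpoly k hk ν x xlast, Hmat_charpoly k hk ν x' xlast'] at hchar
  constructor
  · have htr : (Hmat k ν x xlast).trace = (Hmat k ν x' xlast').trace := by
      haveI : Nonempty (Fin (2*k)) := ⟨⟨0, by omega⟩⟩
      rw [Matrix.trace_eq_neg_charpoly_coeff, Matrix.trace_eq_neg_charpoly_coeff,
        Hmat_charpoly k hk ν x xlast, Hmat_charpoly k hk ν x' xlast', hchar]
    rw [Hmat_trace k hk ν x xlast, Hmat_trace k hk ν x' xlast'] at htr
    exact_mod_cast add_left_cancel htr
  · intro i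
    have hev := congrArg (fun p => p.eval ((ν i : ℂ))) hchar
    simp only [Pchar_eval] at hev
    have hP : ∏ l ∈ Finset.univ.erase i, ((ν i : ℂ) - (ν l : ℂ)) ≠ 0 := by
      rw [Finset.prod_ne_zero_iff]
      intro l hl
      rw [sub_ne_zero]
      exact_mod_cast fun h => (Finset.mem_erase.mp hl).1 (hνinj (Complex.ofReal_injective h)).symm
    have hc : x i * (starRingEnd ℂ) (x i) = x' i * (starRingEnd ℂ) (x' i) :=
      neg_injective (mul_right_cancel₀ hP hev)
    rw [Complex.mul_conj, Complex.mul_conj] at hc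
    have : Complex.normSq (x i) = Complex.normSq (x' i) := by exact_mod_cast hc
    rw [Complex.norm_def, Complex.norm_def, this]
end

section
/- Let k ≥ 1 and let a_1,…,a_k be nonzero real numbers. Set S = diag(L(a_1),…,L(a_{k−1}),L(a_k)) and S̃ = diag(L(a_1),…,L(a_{k−1}),L(−a_k)), both 2k×2k real skew-symmetric matrices. Then the diagonal orthogonal matrix R = diag(1,…,1,−1) (which has determinant −1) satisfies R S R⁻¹ = S̃, so S and S̃ are conjugate by an orthogonal matrix; however, there exists no B ∈ SO(2k) with B S B⁻¹ = S̃. -/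
open Matrix Polynomial

/-- The `m × m` real matrix built from the `2 × 2` blocks `L (c 0), …, L (c (n-1))`
(where `L a` has first row `(0, -a)` and second row `(a, 0)`) placed along the
diagonal, all remaining entries being `0`.  For `m = 2n` this is
`diag (L c₁, …, L cₙ)`; for `m = 2n+1` this is `diag (L c₁, …, L cₙ, 0)`. -/
def diagL (m n : ℕ) (c : Fin n → ℝ) : Matrix (Fin m) (Fin m) ℝ :=
  Matrix.of fun i j =>
    if h : i.val / 2 = j.val / 2 ∧ i.val / 2 < n then
      if i.val % 2 = 0 ∧ j.val % 2 = 1 then -c ⟨i.val / 2, h.2⟩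
      else if i.val % 2 = 1 ∧ j.val % 2 = 0 then c ⟨i.val / 2, h.2⟩
      else 0
    else 0

/-- `X` and `Y` are conjugate by a special orthogonal matrix:
there is `B` with `BᵀB = 1`, `det B = 1` and `B X B⁻¹ = Y`. -/
def SOConj {m : ℕ} (X Y : Matrix (Fin m) (Fin m) ℝ) : Prop :=
  ∃ B : Matrix (Fin m) (Fin m) ℝ, Bᵀ * B = 1 ∧ B.det = 1 ∧ B * X * B⁻¹ = Y

/- ### Auxiliary lemmas -/

lemma key_ring {R : Type*} [Ring R] (T Q Q' : R) (h0 : Q * Q' = 0) (h0' : Q' * Q = 0)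
    (hs : Q + Q' = 2) (c1 : T * Q = Q * T) (c2 : T * Q' = Q' * T) :
    (T * Q + Q') * (T * Q' + Q) = 4 * T := by
  have q2 : Q * Q = Q * 2 := by rw [← hs, mul_add, h0, add_zero]
  have q2' : Q' * Q' = Q' * 2 := by rw [← hs, mul_add, h0', zero_add]
  calc (T * Q + Q') * (T * Q' + Q)
      = T * (Q * T) * Q' + T * (Q * Q) + (Q' * T) * Q' + Q' * Q := by noncomm_ring
    _ = T * (T * Q) * Q' + T * (Q * Q) + (T * Q') * Q' + Q' * Q := by rw [c1, c2]
    _ = T * T * (Q * Q') + T * (Q * Q) + T * (Q' * Q') + Q' * Q := by noncomm_ring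
    _ = T * (Q * 2) + T * (Q' * 2) := by rw [h0, h0', q2, q2']; noncomm_ring
    _ = (T * (Q + Q')) * 2 := by noncomm_ring
    _ = 4 * T := by rw [hs]; noncomm_ring

/-- If a real matrix `C` commutes with a real matrix `J` with `J² = -1`, then
`det C ≥ 0`. -/
lemma det_nonneg_of_commute_cs {m : ℕ} (C J : Matrix (Fin m) (Fin m) ℝ)
    (hJ : J * J = -1) (hCJ : C * J = J * C) : 0 ≤ C.det := by
  set F := (Complex.ofRealHom : ℝ →+* ℂ).mapMatrix (m := Fin m) with hF
  set Cc := F C with hCc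
  set Jc := F J with hJc
  have hJ2 : Jc * Jc = -1 := by rw [hJc, ← _root_.map_mul, hJ, map_neg, _root_.map_one]
  have hc : Cc * Jc = Jc * Cc := by
    rw [hCc, hJc, ← _root_.map_mul, ← _root_.map_mul, hCJ]
  have hCcdet : Cc.det = (C.det : ℂ) := by rw [hCc, hF, ← RingHom.map_det]; rfl
  have hstarCc : (starRingEnd ℂ).mapMatrix Cc = Cc := by
    ext i j
    simp [hCc, hF, RingHom.mapMatrix_apply, Matrix.map_apply]
  have hstarIJ : (starRingEnd ℂ).mapMatrix (Complex.I • Jc) = -(Complex.I • Jc) := by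
    ext i j
    simp [hJc, hF, RingHom.mapMatrix_apply, Matrix.map_apply, Matrix.smul_apply,
      Matrix.neg_apply]
  clear_value Cc Jc
  set Q : Matrix (Fin m) (Fin m) ℂ := 1 - Complex.I • Jc with hQ
  set Q' : Matrix (Fin m) (Fin m) ℂ := 1 + Complex.I • Jc with hQ'
  have hIJ : (Complex.I • Jc) * (Complex.I • Jc) = 1 := by
    rw [smul_mul_assoc, mul_smul_comm, smul_smul, Complex.I_mul_I, hJ2, neg_smul, one_smul,
      neg_neg]
  have hQQ' : Q * Q' = 0 := by
    rw [hQ, hQ', sub_mul, one_mul, mul_add, mul_one, hIJ]; try abel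
  have hQ'Q : Q' * Q = 0 := by
    rw [hQ, hQ', add_mul, one_mul, mul_sub, mul_one, hIJ]; try abel
  have hsum : Q + Q' = 2 := by rw [hQ, hQ', sub_add_add_cancel, one_add_one_eq_two]
  have hCQ : Cc * Q = Q * Cc := by
    rw [hQ, mul_sub, sub_mul, mul_one, one_mul, mul_smul_comm, smul_mul_assoc, hc]
  have hCQ' : Cc * Q' = Q' * Cc := by
    rw [hQ', mul_add, add_mul, mul_one, one_mul, mul_smul_comm, smul_mul_assoc, hc]
  have hstarQ : (starRingEnd ℂ).mapMatrix Q = Q' := by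
    rw [hQ, hQ', map_sub, _root_.map_one, hstarIJ, sub_neg_eq_add]
  have hstarQ' : (starRingEnd ℂ).mapMatrix Q' = Q := by
    rw [hQ, hQ', map_add, _root_.map_one, hstarIJ, ← sub_eq_add_neg]
  clear_value Q Q'
  have key : (Cc * Q + Q') * (Cc * Q' + Q) = 4 * Cc :=
    key_ring Cc Q Q' hQQ' hQ'Q hsum hCQ hCQ'
  set z := (Cc * Q + Q').det with hz
  have hzbar : (starRingEnd ℂ) z = (Cc * Q' + Q).det := by
    rw [hz, RingHom.map_det, map_add, _root_.map_mul, hstarCc, hstarQ, hstarQ']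
  have h4 : (4 : Matrix (Fin m) (Fin m) ℂ) = (4:ℂ) • (1 : Matrix (Fin m) (Fin m) ℂ) := by
    rw [Matrix.smul_one_eq_diagonal]
    exact_mod_cast (Matrix.diagonal_natCast (n := Fin m) (α := ℂ) 4).symm
  have hdet : z * (starRingEnd ℂ) z = (4:ℂ)^m * (C.det : ℂ) := by
    rw [hzbar, hz, ← Matrix.det_mul, key, h4, smul_mul_assoc, one_mul, Matrix.det_smul,
      Fintype.card_fin, hCcdet]
  have hreal : Complex.normSq z = 4^m * C.det := by
    have : (Complex.normSq z : ℂ) = ((4^m * C.det : ℝ) : ℂ) := by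
      rw [← Complex.mul_conj, hdet]; push_cast; ring
    exact_mod_cast this
  nlinarith [Complex.normSq_nonneg z, pow_pos (by norm_num : (0:ℝ) < 4) m]

lemma a_mk_eq {k : ℕ} (a : Fin k → ℝ) {x y : ℕ} (hx : x < k) (hy : y < k) (h : x = y) :
    a ⟨x, hx⟩ = a ⟨y, hy⟩ := by subst h; rfl

lemma diagL_eq_zero {m n : ℕ} {c : Fin n → ℝ} {i j : Fin m} (h : ¬ (i.val / 2 = j.val / 2)) :
    diagL m n c i j = 0 := by
  simp only [diagL, Matrix.of_apply]
  rw [dif_neg]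
  exact fun hh => h hh.1

lemma mul_diagonal_comm_of_entries {m : ℕ} (M : Matrix (Fin m) (Fin m) ℝ) (d : Fin m → ℝ)
    (h : ∀ i j, M i j ≠ 0 → d i = d j) :
    M * Matrix.diagonal d = Matrix.diagonal d * M := by
  ext i j
  rw [Matrix.mul_diagonal, Matrix.diagonal_mul]
  by_cases hM : M i j = 0
  · simp [hM]
  · rw [h i j hM, mul_comm]

lemma mul_diagonal_comm_fun {m : ℕ} (M : Matrix (Fin m) (Fin m) ℝ) (d : Fin m → ℝ) (f : ℝ → ℝ)
    (h : M * Matrix.diagonal d = Matrix.diagonal d * M) :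
    M * Matrix.diagonal (fun i => f (d i)) = Matrix.diagonal (fun i => f (d i)) * M := by
  apply mul_diagonal_comm_of_entries
  intro i j hM
  have h' : M i j * d j = d i * M i j := by
    have := congrFun (congrFun h i) j
    simpa [Matrix.mul_diagonal, Matrix.diagonal_mul] using this
  have hd : d j = d i := mul_left_cancel₀ hM (h'.trans (mul_comm _ _))
  rw [hd]

lemma diagL_sq (k : ℕ) (a : Fin k → ℝ) (d : Fin (2*k) → ℝ)
    (hd : ∀ (i : Fin (2*k)) (h : i.val/2 < k), d i = (a ⟨i.val/2, h⟩)^2) :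
    diagL (2*k) k a * diagL (2*k) k a = - Matrix.diagonal d := by
  ext i j
  have hik : i.val < 2*k := i.isLt
  have hjk : j.val < 2*k := j.isLt
  have hi2 : i.val / 2 < k := by omega
  have hpv : 2*(i.val/2) + (1 - i.val % 2) < 2*k := by omega
  set p : Fin (2*k) := ⟨2*(i.val/2) + (1 - i.val % 2), hpv⟩ with hpdef
  have hpval : p.val = 2*(i.val/2) + (1 - i.val % 2) := rfl
  rw [Matrix.mul_apply, Matrix.neg_apply, Matrix.diagonal_apply]
  rw [Finset.sum_eq_single p]
  · have hp2 : p.val / 2 = i.val / 2 := by omega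
    have hA : diagL (2*k) k a i p =
        (if i.val % 2 = 0 then -a ⟨i.val/2, hi2⟩ else a ⟨i.val/2, hi2⟩) := by
      simp only [diagL, Matrix.of_apply]
      rw [dif_pos ⟨hp2.symm, hi2⟩]
      rcases Nat.mod_two_eq_zero_or_one i.val with hpar | hpar
      · rw [if_pos ⟨hpar, by omega⟩, if_pos hpar]
      · rw [if_neg (by omega), if_pos ⟨hpar, by omega⟩, if_neg (by omega)]
    by_cases hij : i = j
    · subst hij
      have hB : diagL (2*k) k a p i =
          (if i.val % 2 = 0 then a ⟨i.val/2, hi2⟩ else -a ⟨i.val/2, hi2⟩) := by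
        simp only [diagL, Matrix.of_apply]
        rw [dif_pos ⟨hp2, by omega⟩]
        rcases Nat.mod_two_eq_zero_or_one i.val with hpar | hpar
        · rw [if_neg (by omega), if_pos ⟨by omega, hpar⟩, if_pos hpar,
            a_mk_eq a (by omega) hi2 hp2]
        · rw [if_pos ⟨by omega, hpar⟩, if_neg (by omega),
            a_mk_eq a (by omega) hi2 hp2]
      rw [hA, hB, if_pos rfl, hd i hi2]
      rcases Nat.mod_two_eq_zero_or_one i.val with hpar | hpar
      · rw [if_pos hpar, if_pos hpar]; ring
      · rw [if_neg (by omega), if_neg (by omega)]; ring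
    · have hB : diagL (2*k) k a p j = 0 := by
        simp only [diagL, Matrix.of_apply]
        by_cases hcond : p.val / 2 = j.val / 2 ∧ p.val / 2 < k
        · rw [dif_pos hcond]
          have hne : i.val ≠ j.val := fun hh => hij (Fin.ext hh)
          rw [if_neg (by omega), if_neg (by omega)]
        · rw [dif_neg hcond]
      rw [hB, mul_zero, if_neg hij, neg_zero]
  · intro b _ hb
    have hbne : b.val ≠ p.val := fun hh => hb (Fin.ext hh)
    have hA : diagL (2*k) k a i b = 0 := by
      simp only [diagL, Matrix.of_apply]
      by_cases hcond : i.val / 2 = b.val / 2 ∧ i.val / 2 < k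
      · rw [dif_pos hcond]
        rw [if_neg (by omega), if_neg (by omega)]
      · rw [dif_neg hcond]
    rw [hA, zero_mul]
  · intro h; exact absurd (Finset.mem_univ p) h

lemma RSR (k : ℕ) (hk : 1 ≤ k) (a : Fin k → ℝ) :
    Matrix.diagonal (fun i : Fin (2*k) => if i.val = 2*k - 1 then (-1:ℝ) else 1) *
      diagL (2*k) k a *
      Matrix.diagonal (fun i : Fin (2*k) => if i.val = 2*k - 1 then (-1:ℝ) else 1) =
    diagL (2*k) k (fun i => if i.val = k - 1 then -a i else a i) := by
  ext i j
  rw [Matrix.mul_diagonal, Matrix.diagonal_mul]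
  have hik : i.val < 2*k := i.isLt
  have hjk : j.val < 2*k := j.isLt
  simp only [diagL, Matrix.of_apply]
  by_cases hcond : i.val / 2 = j.val / 2 ∧ i.val / 2 < k
  · rw [dif_pos hcond, dif_pos hcond]
    split_ifs <;> first | ring1 | (exfalso; omega)
  · rw [dif_neg hcond, dif_neg hcond]
    split_ifs <;> ring

/-- For nonzero `a₁, …, aₖ`, the matrices `S = diag (L a₁, …, L aₖ)` and
`S̃ = diag (L a₁, …, L a_{k-1}, L (-aₖ))` are conjugate by the orthogonal matrix
`R = diag (1, …, 1, -1)` of determinant `-1`, but they are not SO(2k)-conjugate. -/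
theorem statement18 (k : ℕ) (hk : 1 ≤ k) (a : Fin k → ℝ) (ha : ∀ i, a i ≠ 0) :
    letI S : Matrix (Fin (2*k)) (Fin (2*k)) ℝ := diagL (2*k) k a
    letI S' : Matrix (Fin (2*k)) (Fin (2*k)) ℝ :=
      diagL (2*k) k (fun i => if i.val = k - 1 then -a i else a i)
    letI R : Matrix (Fin (2*k)) (Fin (2*k)) ℝ :=
      Matrix.diagonal (fun i => if i.val = 2*k - 1 then -1 else 1)
    Rᵀ * R = 1 ∧ R.det = -1 ∧ R * S * R⁻¹ = S' ∧ ¬ SOConj S S' := by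
  set r : Fin (2*k) → ℝ := fun i => if i.val = 2*k - 1 then -1 else 1 with hr
  set Sm : Matrix (Fin (2*k)) (Fin (2*k)) ℝ := diagL (2*k) k a with hSm
  set Sm' : Matrix (Fin (2*k)) (Fin (2*k)) ℝ :=
    diagL (2*k) k (fun i => if i.val = k - 1 then -a i else a i) with hSm'
  have hRT : (Matrix.diagonal r)ᵀ = Matrix.diagonal r := Matrix.diagonal_transpose r
  have hRR : Matrix.diagonal r * Matrix.diagonal r = 1 := by
    have hone : (fun i => r i * r i) = fun _ : Fin (2*k) => (1:ℝ) := by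
      funext i; rw [hr]; dsimp only; split_ifs <;> norm_num
    rw [Matrix.diagonal_mul_diagonal, hone, Matrix.diagonal_one]
  have hRinv : (Matrix.diagonal r)⁻¹ = Matrix.diagonal r := Matrix.inv_eq_right_inv hRR
  have h2k1 : 2*k - 1 < 2*k := by omega
  have hdetR : (Matrix.diagonal r).det = -1 := by
    rw [Matrix.det_diagonal]
    rw [Finset.prod_eq_single (⟨2*k - 1, h2k1⟩ : Fin (2*k))]
    · rw [hr]; simp
    · intro b _ hb
      have : b.val ≠ 2*k - 1 := fun hh => hb (Fin.ext hh)
      rw [hr]; dsimp only; rw [if_neg this]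
    · intro h; exact absurd (Finset.mem_univ _) h
  have hRSR : Matrix.diagonal r * Sm * Matrix.diagonal r = Sm' := RSR k hk a
  refine ⟨by rw [hRT, hRR], hdetR, by rw [hRinv, hRSR], ?_⟩
  rintro ⟨B, hB1, hB2, hB3⟩
  clear_value r Sm Sm'
  have hBinv : B⁻¹ = Bᵀ := Matrix.inv_eq_left_inv hB1
  rw [hBinv] at hB3
  set C := Matrix.diagonal r * B with hC
  have hCt : Cᵀ = Bᵀ * Matrix.diagonal r := by rw [hC, Matrix.transpose_mul, hRT]
  have hCC : Cᵀ * C = 1 := by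
    rw [hCt, hC]
    calc Bᵀ * Matrix.diagonal r * (Matrix.diagonal r * B)
        = Bᵀ * (Matrix.diagonal r * Matrix.diagonal r) * B := by noncomm_ring
      _ = Bᵀ * B := by rw [hRR, mul_one]
      _ = 1 := hB1
  have hCSC : C * Sm * Cᵀ = Sm := by
    rw [hC, hCt]
    calc Matrix.diagonal r * B * Sm * (Bᵀ * Matrix.diagonal r)
        = Matrix.diagonal r * (B * Sm * Bᵀ) * Matrix.diagonal r := by noncomm_ring
      _ = Matrix.diagonal r * Sm' * Matrix.diagonal r := by rw [hB3]
      _ = Matrix.diagonal r * (Matrix.diagonal r * Sm * Matrix.diagonal r) *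
            Matrix.diagonal r := by rw [hRSR]
      _ = (Matrix.diagonal r * Matrix.diagonal r) * Sm *
            (Matrix.diagonal r * Matrix.diagonal r) := by noncomm_ring
      _ = Sm := by rw [hRR, one_mul, mul_one]
  have hCS : C * Sm = Sm * C := by
    have h1 : C * Sm * Cᵀ * C = Sm * C := by rw [hCSC]
    rwa [Matrix.mul_assoc (C * Sm) Cᵀ C, hCC, mul_one] at h1
  have hdetC : C.det = -1 := by
    rw [hC, Matrix.det_mul, hdetR, hB2, mul_one]
  clear_value C
  set d : Fin (2*k) → ℝ := fun i => if h : i.val/2 < k then (a ⟨i.val/2, h⟩)^2 else 1 with hd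
  have hdspec : ∀ (i : Fin (2*k)) (h : i.val/2 < k), d i = (a ⟨i.val/2, h⟩)^2 :=
    fun i h => dif_pos h
  have hSS : Sm * Sm = - Matrix.diagonal d := by
    rw [hSm]; exact diagL_sq k a d hdspec
  have hSd : Sm * Matrix.diagonal d = Matrix.diagonal d * Sm := by
    rw [hSm]
    apply mul_diagonal_comm_of_entries
    intro i j hM
    have hij : i.val/2 = j.val/2 := by
      by_contra hcc; exact hM (diagL_eq_zero hcc)
    have hik : i.val < 2*k := i.isLt
    have hjk : j.val < 2*k := j.isLt
    rw [hdspec i (by omega), hdspec j (by omega), a_mk_eq a (by omega) (by omega) hij]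
  have hCd : C * Matrix.diagonal d = Matrix.diagonal d * C := by
    have h1 : C * (Sm * Sm) = (Sm * Sm) * C := by
      calc C * (Sm * Sm) = (C * Sm) * Sm := by rw [Matrix.mul_assoc]
        _ = (Sm * C) * Sm := by rw [hCS]
        _ = Sm * (C * Sm) := by rw [Matrix.mul_assoc]
        _ = Sm * (Sm * C) := by rw [hCS]
        _ = (Sm * Sm) * C := by rw [← Matrix.mul_assoc]
    rw [hSS, mul_neg, neg_mul] at h1
    exact neg_injective h1
  set f : ℝ → ℝ := fun x => (Real.sqrt x)⁻¹ with hf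
  set E := Matrix.diagonal (fun i => f (d i)) with hE
  have hCE : C * E = E * C := mul_diagonal_comm_fun C d f hCd
  have hSE : Sm * E = E * Sm := mul_diagonal_comm_fun Sm d f hSd
  have hDE : Matrix.diagonal d * (E * E) = 1 := by
    have hone : (fun i => d i * (f (d i) * f (d i))) = fun _ : Fin (2*k) => (1:ℝ) := by
      funext i
      have hik : i.val < 2*k := i.isLt
      have h2 : i.val/2 < k := by omega
      rw [hdspec i h2, hf]
      dsimp only
      have hane : a ⟨i.val/2, h2⟩ ≠ 0 := ha _
      rw [Real.sqrt_sq_eq_abs]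
      have habs : |a ⟨i.val/2, h2⟩| ≠ 0 := abs_ne_zero.mpr hane
      field_simp
      rw [sq_abs]
    rw [hE, Matrix.diagonal_mul_diagonal, Matrix.diagonal_mul_diagonal, hone,
      Matrix.diagonal_one]
  clear_value d f E
  have hJJ : (Sm * E) * (Sm * E) = -1 := by
    calc (Sm * E) * (Sm * E) = Sm * (E * Sm) * E := by noncomm_ring
      _ = Sm * (Sm * E) * E := by rw [hSE]
      _ = (Sm * Sm) * (E * E) := by noncomm_ring
      _ = -(Matrix.diagonal d * (E * E)) := by rw [hSS]; noncomm_ring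
      _ = -1 := by rw [hDE]
  have hCJ : C * (Sm * E) = (Sm * E) * C := by
    calc C * (Sm * E) = (C * Sm) * E := by rw [Matrix.mul_assoc]
      _ = Sm * (C * E) := by rw [hCS, Matrix.mul_assoc]
      _ = Sm * (E * C) := by rw [hCE]
      _ = (Sm * E) * C := by rw [Matrix.mul_assoc]
  have hpos := det_nonneg_of_commute_cs C (Sm * E) hJJ hCJ
  rw [hdetC] at hpos
  linarith
end
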